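/- arXiv:2006.06157 — 6 statements merged into one kernel-verified Lean document; each statement's English description precedes it below -/
import Mathlib

section
/- For any collection of pairwise commuting invertible complex n×n matrices A_1, ..., A_k, there exist complex n×n matrices L_1, ..., L_k such that exp(L_j) = A_j for each j and the matrices L_1, ..., L_k pairwise commute. -/
open NormedSpace

set_option maxHeartbeats 1000000 in
open Polynomial in
/-- In a finite-dimensional commutative (in the sense of the hypothesis `hcomm`) normed
`ℂ`-algebra, every unit is an exponential. -/
theorem aux_isUnit_mem_range_exp {R : Type*} [NormedRing R] [NormedAlgebra ℂ R]
    [CompleteSpace R] [FiniteDimensional ℂ R] (hcomm : ∀ x y : R, Commute x y)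
    {u : R} (hu : IsUnit u) : ∃ y : R, exp y = u := by
  classical
  let +nondep : NormedAlgebra ℚ R := .restrictScalars ℚ ℂ R
  by_contra hng
  push_neg at hng
  have hnotmem : u ∉ Set.range (exp : R → R) := by
    rintro ⟨y, rfl⟩; exact hng y rfl
  -- the basis and the "determinant of left multiplication" criterion for units
  set bs := Module.finBasis ℂ R with hbs
  set φ : (Module.End ℂ R) ≃ₐ[ℂ] Matrix (Fin (Module.finrank ℂ R)) (Fin (Module.finrank ℂ R)) ℂ :=
    LinearMap.toMatrixAlgEquiv bs with hφ
  have hchar : ∀ x : R, IsUnit x ↔ (φ (Algebra.lmul ℂ R x)).det ≠ 0 := by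
    intro x
    rw [← isUnit_iff_ne_zero, ← Matrix.isUnit_iff_isUnit_det]
    constructor
    · intro hx
      exact (hx.map (Algebra.lmul ℂ R)).map φ
    · intro hx
      have : IsUnit (Algebra.lmul ℂ R x) := by
        have := hx.map φ.symm
        rwa [AlgEquiv.symm_apply_apply] at this
      exact Algebra.lmul_isUnit_iff.mp this
  -- the units form a path-connected set
  have key : ∀ a b : R, IsUnit a → IsUnit b → JoinedIn {x : R | IsUnit x} a b := by
    intro a b ha hb
    set c := b - a with hc
    set Ma := φ (Algebra.lmul ℂ R a) with hMa
    set Mc := φ (Algebra.lmul ℂ R c) with hMc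
    set Q : ℂ[X] := ((Ma.map C) + (X : ℂ[X]) • (Mc.map C)).det with hQ
    have heval : ∀ t : ℂ, Q.eval t = (φ (Algebra.lmul ℂ R (a + t • c))).det := by
      intro t
      have h1 : φ (Algebra.lmul ℂ R (a + t • c)) = Ma + t • Mc := by
        rw [hMa, hMc, map_add, map_smul, map_add, map_smul]
      rw [h1, hQ]
      have h3 : Polynomial.eval t ((Ma.map C + (X : ℂ[X]) • Mc.map C).det)
          = ((evalRingHom t).mapMatrix ((Ma.map C) + (X : ℂ[X]) • (Mc.map C))).det :=
        RingHom.map_det (evalRingHom t) _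
      rw [h3]
      congr 1
      ext i j
      simp only [RingHom.mapMatrix_apply, Matrix.map_apply, Matrix.add_apply, Matrix.smul_apply,
        smul_eq_mul, Polynomial.coe_evalRingHom, Polynomial.eval_add, Polynomial.eval_mul,
        Polynomial.eval_C, Polynomial.eval_X]
    have hQ0 : Q ≠ 0 := by
      intro h
      have h0 := heval 0
      rw [h, Polynomial.eval_zero] at h0
      apply (hchar a).mp ha
      rw [← h0.symm]
      simp
    have hZ : {t : ℂ | Q.IsRoot t}.Finite := Polynomial.finite_setOf_isRoot hQ0
    have hpc : IsPathConnected {t : ℂ | Q.IsRoot t}ᶜ :=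
      Set.Countable.isPathConnected_compl_of_one_lt_rank
        (by rw [Complex.rank_real_complex]; exact Cardinal.one_lt_two) hZ.countable
    have hmem : ∀ t : ℂ, IsUnit (a + t • c) → t ∈ {t : ℂ | Q.IsRoot t}ᶜ := by
      intro t ht hroot
      exact (hchar _).mp ht (by rwa [← heval])
    have he0 : a + (0 : ℂ) • c = a := by rw [zero_smul, add_zero]
    have he1 : a + (1 : ℂ) • c = b := by rw [one_smul, hc]; abel
    have h0mem : (0 : ℂ) ∈ {t : ℂ | Q.IsRoot t}ᶜ := hmem 0 (by rw [he0]; exact ha)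
    have h1mem : (1 : ℂ) ∈ {t : ℂ | Q.IsRoot t}ᶜ := hmem 1 (by rw [he1]; exact hb)
    have himg : IsPathConnected ((fun t : ℂ => a + t • c) '' {t : ℂ | Q.IsRoot t}ᶜ) :=
      hpc.image (by continuity)
    have hjoin : JoinedIn ((fun t : ℂ => a + t • c) '' {t : ℂ | Q.IsRoot t}ᶜ) a b := by
      have ha' : a ∈ (fun t : ℂ => a + t • c) '' {t : ℂ | Q.IsRoot t}ᶜ :=
        ⟨0, h0mem, he0⟩
      have hb' : b ∈ (fun t : ℂ => a + t • c) '' {t : ℂ | Q.IsRoot t}ᶜ :=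
        ⟨1, h1mem, he1⟩
      exact himg.joinedIn a ha' b hb'
    refine hjoin.mono ?_
    rintro x ⟨t, ht, rfl⟩
    show IsUnit (a + t • c)
    rw [hchar]
    intro h
    exact ht (by rwa [Set.mem_setOf_eq, Polynomial.IsRoot, heval])
  have hU : IsPathConnected {x : R | IsUnit x} :=
    ⟨1, isUnit_one, fun _ hy => key 1 _ isUnit_one hy⟩
  -- the range of exp is a neighborhood of 1
  have hmap : Filter.map (exp : R → R) (nhds 0) = nhds (1 : R) := by
    have h : HasStrictFDerivAt (exp : R → R)
        ((ContinuousLinearEquiv.refl ℂ R : R ≃L[ℂ] R) : R →L[ℂ] R) 0 :=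
      hasStrictFDerivAt_exp_zero
    have h2 := h.map_nhds_eq_of_equiv
    rwa [exp_zero] at h2
  have hG1 : Set.range (exp : R → R) ∈ nhds (1 : R) := by
    rw [← hmap]
    exact Filter.mem_map.mpr (Filter.univ_mem' fun x => ⟨x, rfl⟩)
  have hexp_mul : ∀ s t : R, exp s * exp t = exp (s + t) := fun s t =>
    (exp_add_of_commute (hcomm s t)).symm
  have hexp_inv : ∀ s : R, exp s * exp (-s) = 1 := fun s => by
    rw [hexp_mul, add_neg_cancel, exp_zero]
  -- the range of exp is open
  have hGopen : IsOpen (Set.range (exp : R → R)) := by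
    rw [isOpen_iff_mem_nhds]
    rintro _ ⟨a, rfl⟩
    have hcont : ContinuousAt (fun x : R => exp (-a) * x) (exp a) :=
      (continuous_const.mul continuous_id).continuousAt
    have h1 : exp (-a) * exp a = 1 := by rw [hexp_mul, neg_add_cancel, exp_zero]
    have hpre := hcont.preimage_mem_nhds (by rw [h1]; exact hG1)
    refine Filter.mem_of_superset hpre ?_
    rintro x ⟨b, hb⟩
    refine ⟨a + b, ?_⟩
    have h4 : exp a * exp b = x := by
      rw [hb, ← mul_assoc, hexp_inv a, one_mul]
    rw [← hexp_mul a b]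
    exact h4
  -- the complement of the range of exp within the units is open
  have hWopen : IsOpen {x : R | IsUnit x ∧ x ∉ Set.range (exp : R → R)} := by
    rw [isOpen_iff_mem_nhds]
    rintro v ⟨hv, hvn⟩
    have hcont : ContinuousAt (fun x : R => ↑hv.unit⁻¹ * x) v :=
      (continuous_const.mul continuous_id).continuousAt
    have h1 : (↑hv.unit⁻¹ : R) * v = 1 := hv.val_inv_mul
    have hpre := hcont.preimage_mem_nhds (by rw [h1]; exact hG1)
    refine Filter.mem_of_superset (Filter.inter_mem hpre (Units.isOpen.mem_nhds hv)) ?_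
    rintro x ⟨⟨b, hb⟩, hxu⟩
    refine ⟨hxu, ?_⟩
    rintro ⟨s, rfl⟩
    apply hvn
    -- from hb : ↑hv.unit⁻¹ * exp s = exp b, deduce v = exp (s + -b)
    refine ⟨s + -b, ?_⟩
    have hx : exp s = v * exp b := by
      have := congrArg (fun z => (↑hv.unit : R) * z) hb
      simpa [← mul_assoc, hv.unit_spec, Units.mul_inv_cancel_left] using this.symm
    rw [← hexp_mul]
    rw [hx, mul_assoc, hexp_inv b, mul_one]
  -- conclude by preconnectedness of the units
  have hprec : IsPreconnected {x : R | IsUnit x} := hU.isConnected.isPreconnected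
  obtain ⟨x, hx⟩ := hprec (Set.range (exp : R → R))
    {x : R | IsUnit x ∧ x ∉ Set.range (exp : R → R)} hGopen hWopen
    (by
      intro x hx
      by_cases h : x ∈ Set.range (exp : R → R)
      · exact Or.inl h
      · exact Or.inr ⟨hx, h⟩)
    ⟨1, isUnit_one, ⟨0, exp_zero⟩⟩
    ⟨u, hu, hu, hnotmem⟩
  exact hx.2.2.2 hx.2.1

/-- For any collection of pairwise commuting invertible complex `n × n` matrices
`A 1, …, A k`, there exist complex matrices `L 1, …, L k` such that `exp (L j) = A j`
for each `j` and the `L j` pairwise commute. -/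
theorem commuting_matrix_logarithms (n k : ℕ)
    (A : Fin k → Matrix (Fin n) (Fin n) ℂ)
    (hinv : ∀ j, IsUnit (A j))
    (hcomm : ∀ i j, Commute (A i) (A j)) :
    ∃ L : Fin k → Matrix (Fin n) (Fin n) ℂ,
      (∀ j, NormedSpace.exp (L j) = A j) ∧ ∀ i j, Commute (L i) (L j) := by
  classical
  letI : SeminormedRing (Matrix (Fin n) (Fin n) ℂ) := Matrix.linftyOpSemiNormedRing
  letI : NormedRing (Matrix (Fin n) (Fin n) ℂ) := Matrix.linftyOpNormedRing
  letI : NormedAlgebra ℂ (Matrix (Fin n) (Fin n) ℂ) := Matrix.linftyOpNormedAlgebra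
  set S : Subalgebra ℂ (Matrix (Fin n) (Fin n) ℂ) := Algebra.adjoin ℂ (Set.range A) with hS
  haveI : FiniteDimensional ℂ ↥S :=
    FiniteDimensional.of_injective S.val.toLinearMap Subtype.val_injective
  haveI : CompleteSpace ↥S := by
    haveI : IsUniformAddGroup ↥S := SeminormedAddCommGroup.to_isUniformAddGroup
    exact FiniteDimensional.complete ℂ ↥S
  have hmem : ∀ j, A j ∈ S := fun j => Algebra.subset_adjoin ⟨j, rfl⟩
  -- elements of S pairwise commute
  have hcommM : ∀ x ∈ S, ∀ y ∈ S, Commute x y := by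
    intro x hx y hy
    refine Algebra.commute_of_mem_adjoin_of_forall_mem_commute hy ?_
    rintro b ⟨j, rfl⟩
    exact (Algebra.commute_of_mem_adjoin_of_forall_mem_commute hx
      (by rintro b' ⟨i, rfl⟩; exact hcomm j i)).symm
  have hcommS : ∀ x y : ↥S, Commute x y := by
    rintro ⟨x, hx⟩ ⟨y, hy⟩
    exact Subtype.ext (hcommM x hx y hy)
  -- each A j is a unit of S
  have hunitS : ∀ j, IsUnit (⟨A j, hmem j⟩ : ↥S) := by
    intro j
    rw [← Algebra.lmul_isUnit_iff (R := ℂ), Module.End.isUnit_iff]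
    have hinj : Function.Injective (Algebra.lmul ℂ ↥S (⟨A j, hmem j⟩ : ↥S)) := by
      intro x y hxy
      have h : A j * (x : Matrix (Fin n) (Fin n) ℂ) = A j * (y : Matrix (Fin n) (Fin n) ℂ) :=
        congrArg Subtype.val hxy
      exact Subtype.ext ((hinv j).mul_left_cancel h)
    exact ⟨hinj, LinearMap.injective_iff_surjective.mp hinj⟩
  choose Y hY using fun j => aux_isUnit_mem_range_exp hcommS (hunitS j)
  refine ⟨fun j => (Y j : Matrix (Fin n) (Fin n) ℂ), ?_, ?_⟩
  · intro j
    have hval : Continuous (S.val : ↥S → Matrix (Fin n) (Fin n) ℂ) := continuous_subtype_val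
    let +nondep : NormedAlgebra ℚ ↥S := .restrictScalars ℚ ℂ ↥S
    have h := map_exp S.val hval (Y j)
    rw [hY j] at h
    exact h.symm
  · intro i j
    exact (hcommS (Y i) (Y j)).map S.val
end

section
/- Let N be a nilpotent complex n×n matrix and λ a nonzero complex number. Then the matrix L := (log λ)·I − Σ_{m=1}^{n-1} (1/m)·(−N/λ)^m satisfies exp(L) = λI + N, where log λ is any fixed complex logarithm of λ. -/
open NormedSpace Polynomial

private lemma merc_X_dvd (m : ℕ) :
    (X : ℂ[X]) ∣ ∑ i ∈ Finset.Icc 1 m, C ((i : ℂ))⁻¹ * X ^ i := by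
  apply Finset.dvd_sum
  intro i hi
  have h1 : 1 ≤ i := (Finset.mem_Icc.mp hi).1
  exact Dvd.dvd.mul_left (dvd_pow_self X (by omega)) _

private lemma merc_deriv (m : ℕ) :
    derivative (∑ i ∈ Finset.Icc 1 m, C ((i : ℂ))⁻¹ * X ^ i)
      = ∑ j ∈ Finset.range m, X ^ j := by
  induction m with
  | zero => simp
  | succ k ih =>
    rw [Finset.sum_Icc_succ_top (by omega), derivative_add, ih, Finset.sum_range_succ]
    congr 1
    rw [derivative_C_mul, derivative_X_pow]
    rw [← mul_assoc, ← C_mul,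
      inv_mul_cancel₀ (Nat.cast_ne_zero.mpr (Nat.succ_ne_zero k) : ((k+1:ℕ):ℂ) ≠ 0),
      C_1, one_mul, Nat.add_sub_cancel]

private lemma mercator_poly (m : ℕ) :
    (X : ℂ[X]) ^ (m + 1) ∣
      (∑ k ∈ Finset.range (m + 1),
          C ((k.factorial : ℂ))⁻¹ * (-(∑ i ∈ Finset.Icc 1 m, C ((i : ℂ))⁻¹ * X ^ i)) ^ k)
        - (1 - X) := by
  set s : ℂ[X] := ∑ i ∈ Finset.Icc 1 m, C ((i : ℂ))⁻¹ * X ^ i with hs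
  set e : ℂ[X] := ∑ k ∈ Finset.range (m + 1), C ((k.factorial : ℂ))⁻¹ * (-s) ^ k with he
  set E : ℂ[X] := ∑ k ∈ Finset.range m, C ((k.factorial : ℂ))⁻¹ * (-s) ^ k with hE
  set T : ℂ[X] := C ((m.factorial : ℂ))⁻¹ * (-s) ^ m with hT
  have hsplit : e = E + T := Finset.sum_range_succ _ m
  have hXs : (X : ℂ[X]) ∣ s := merc_X_dvd m
  have hXT : (X : ℂ[X]) ^ m ∣ T := by
    apply Dvd.dvd.mul_left
    rw [neg_pow]
    exact Dvd.dvd.mul_left (pow_dvd_pow_of_dvd hXs m) _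
  have hgeom : (1 - X) * derivative s = 1 - X ^ m := by
    rw [merc_deriv m]
    have := geom_sum_mul (X : ℂ[X]) m
    linear_combination -this
  have hde : derivative e = E * (-derivative s) := by
    rw [he, derivative_sum, Finset.sum_range_succ']
    have h0 : derivative (C ((Nat.factorial 0 : ℂ))⁻¹ * (-s) ^ 0) = 0 := by simp
    rw [h0, add_zero, hE, Finset.sum_mul]
    refine Finset.sum_congr rfl fun i _ => ?_
    rw [derivative_C_mul, derivative_pow, derivative_neg]
    have hfac : (C (((i+1).factorial : ℂ))⁻¹) * C (((i:ℕ)+1 : ℂ)) = C ((i.factorial : ℂ))⁻¹ := by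
      rw [← C_mul]
      congr 1
      have h1 : ((i:ℂ)+1) ≠ 0 := Nat.cast_add_one_ne_zero i
      rw [Nat.factorial_succ]
      push_cast
      rw [mul_inv, mul_comm ((i:ℂ)+1)⁻¹, mul_assoc, inv_mul_cancel₀ h1, mul_one]
    push_cast
    calc C ((((i+1).factorial : ℕ) : ℂ))⁻¹ * (C (((i:ℕ)+1 : ℂ)) * (-s) ^ (i + 1 - 1) * -derivative s)
        = (C ((((i+1).factorial : ℕ) : ℂ))⁻¹ * C (((i:ℕ)+1 : ℂ))) * ((-s) ^ i * -derivative s) := by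
          rw [Nat.add_sub_cancel]; ring
      _ = C ((i.factorial : ℂ))⁻¹ * (-s) ^ i * -derivative s := by rw [hfac]; ring
  set d : ℂ[X] := e - (1 - X) with hd
  have hdd : derivative d = derivative e + 1 := by
    rw [hd]; simp
  have key : (1 - X) * derivative d + d = T + X ^ m * E := by
    rw [hdd, hde, hd]
    linear_combination (-E) * hgeom + hsplit
  have hqd : (X : ℂ[X]) ^ m ∣ (1 - X) * derivative d + d := by
    rw [key]
    exact dvd_add hXT (Dvd.intro E rfl)
  have hq0 : ∀ j < m, ((1 - X) * derivative d + d).coeff j = 0 :=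
    X_pow_dvd_iff.mp hqd
  have hd0 : d.coeff 0 = 0 := by
    rw [Polynomial.coeff_zero_eq_eval_zero, hd, he]
    have : ∀ k ∈ Finset.range (m+1),
        (C ((k.factorial : ℂ))⁻¹ * (-s) ^ k).eval 0 = if k = 0 then 1 else 0 := by
      intro k _
      have hs0 : s.eval 0 = 0 := by
        obtain ⟨r, hr⟩ := hXs
        rw [hr]; simp
      rcases k with _ | k
      · simp
      · simp [hs0, Nat.succ_ne_zero]
    rw [eval_sub, eval_finset_sum, Finset.sum_congr rfl this, Finset.sum_ite_eq' (Finset.range (m+1)) 0]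
    simp
  have hcoeff : ∀ j, j ≤ m → d.coeff j = 0 := by
    intro j
    induction j with
    | zero => intro _; exact hd0
    | succ i ih =>
      intro hi
      have h2 : d.coeff i = 0 := ih (by omega)
      have h1 : ((1 - X) * derivative d + d).coeff i = 0 := hq0 i (by omega)
      have hXmul : (X * derivative d).coeff i = d.coeff i * (i : ℂ) := by
        rcases i with _ | j
        · simp [Polynomial.mul_coeff_zero]
        · rw [Polynomial.coeff_X_mul, Polynomial.coeff_derivative]
          push_cast
          ring
      have hexp : ((1 - X) * derivative d + d).coeff i
          = d.coeff (i+1) * ((i:ℂ)+1) - d.coeff i * (i:ℂ) + d.coeff i := by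
        have : (1 - X) * derivative d + d = derivative d - X * derivative d + d := by ring
        rw [this, Polynomial.coeff_add, Polynomial.coeff_sub, hXmul, Polynomial.coeff_derivative]
      rw [hexp, h2] at h1
      have hne : ((i:ℂ)+1) ≠ 0 := Nat.cast_add_one_ne_zero i
      simpa [hne] using h1
  exact X_pow_dvd_iff.mpr fun j hj => hcoeff j (by omega)


private lemma exp_nilpotent_eq_sum {n K : ℕ} (A : Matrix (Fin n) (Fin n) ℂ) (hA : A ^ K = 0) :
    NormedSpace.exp A = ∑ k ∈ Finset.range K, ((k.factorial : ℂ))⁻¹ • A ^ k := by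
  rw [NormedSpace.exp_eq_tsum ℂ]
  refine tsum_eq_sum fun k hk => ?_
  have hKk : K ≤ k := by simpa using hk
  have : A ^ k = 0 := by
    rw [← Nat.sub_add_cancel hKk, pow_add, hA, mul_zero]
  simp [this]

/-- If `N` is a nilpotent complex `n × n` matrix (so `N ^ n = 0`) and `λ ≠ 0`, then
for any complex logarithm `l` of `λ` (i.e. `exp l = λ`), the matrix
`L = l • I − Σ_{m=1}^{n-1} (1/m) • (−λ⁻¹ • N)^m` satisfies `exp L = λ • I + N`. -/
theorem exp_mercator_log_jordan (n : ℕ) (N : Matrix (Fin n) (Fin n) ℂ)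
    (hN : N ^ n = 0) (lam l : ℂ) (hlam : lam ≠ 0) (hl : Complex.exp l = lam) :
    NormedSpace.exp
        (l • (1 : Matrix (Fin n) (Fin n) ℂ) -
          ∑ m ∈ Finset.Icc 1 (n - 1), ((m : ℂ)⁻¹) • ((-lam⁻¹) • N) ^ m)
      = lam • (1 : Matrix (Fin n) (Fin n) ℂ) + N := by
  cases n with
  | zero => ext i j; exact i.elim0
  | succ m =>
    simp only [Nat.add_sub_cancel]
    set M : Matrix (Fin (m+1)) (Fin (m+1)) ℂ := (-lam⁻¹) • N with hMdef
    have hMpow : M ^ (m+1) = 0 := by rw [hMdef, _root_.smul_pow, hN, smul_zero]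
    set s : ℂ[X] := ∑ i ∈ Finset.Icc 1 m, C ((i : ℂ))⁻¹ * X ^ i with hs
    have hSa : (∑ i ∈ Finset.Icc 1 m, ((i:ℂ))⁻¹ • M ^ i) = aeval M s := by
      rw [hs, map_sum]
      refine Finset.sum_congr rfl fun i _ => ?_
      rw [map_mul, aeval_C, map_pow, aeval_X, Algebra.smul_def]
    rw [hSa, sub_eq_add_neg, Matrix.exp_add_of_commute _ _ ((Commute.one_left _).smul_left l)]
    have hXs : (X : ℂ[X]) ∣ s := merc_X_dvd m
    have h1 : NormedSpace.exp (l • (1 : Matrix (Fin (m+1)) (Fin (m+1)) ℂ)) = lam • 1 := by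
      rw [NormedSpace.exp_eq_tsum ℂ]
      beta_reduce
      have hsum : ∀ k : ℕ, (k.factorial:ℂ)⁻¹ • (l • (1 : Matrix (Fin (m+1)) (Fin (m+1)) ℂ)) ^ k
          = ((k.factorial:ℂ)⁻¹ * l ^ k) • (1 : Matrix (Fin (m+1)) (Fin (m+1)) ℂ) := fun k => by
        rw [_root_.smul_pow, one_pow, smul_smul]
      refine (tsum_congr hsum).trans ?_
      rw [Summable.tsum_smul_const (by simpa [smul_eq_mul] using expSeries_summable' (𝕂 := ℂ) l)]
      congr 1
      have : ∑' k : ℕ, (k.factorial:ℂ)⁻¹ * l ^ k = NormedSpace.exp l := by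
        rw [NormedSpace.exp_eq_tsum ℂ]
        simp [smul_eq_mul]
      rw [this, ← Complex.exp_eq_exp_ℂ, hl]
    have h2 : NormedSpace.exp (-(aeval M s)) = 1 - M := by
      have hnil : (-(aeval M s)) ^ (m+1) = 0 := by
        rw [← map_neg, ← map_pow]
        obtain ⟨r, hr⟩ : (X:ℂ[X])^(m+1) ∣ (-s)^(m+1) :=
          pow_dvd_pow_of_dvd ((dvd_neg).mpr hXs) _
        rw [hr, map_mul, map_pow, aeval_X, hMpow, zero_mul]
      rw [exp_nilpotent_eq_sum _ hnil]
      obtain ⟨r, hr⟩ : (X : ℂ[X]) ^ (m + 1) ∣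
          (∑ k ∈ Finset.range (m + 1), C ((k.factorial : ℂ))⁻¹ * (-s) ^ k) - (1 - X) := by
        rw [hs]; exact mercator_poly m
      have he : (∑ k ∈ Finset.range (m+1), C ((k.factorial:ℂ))⁻¹ * (-s)^k)
          = (1 - X) + X^(m+1) * r := by rw [← hr]; ring
      calc ∑ k ∈ Finset.range (m+1), ((k.factorial:ℂ))⁻¹ • (-(aeval M s))^k
          = aeval M ((1-X) + X^(m+1)*r) := by
            rw [← he]
            conv_rhs => rw [map_sum]
            refine Finset.sum_congr rfl fun k _ => ?_
            rw [map_mul, aeval_C, map_pow, map_neg, Algebra.smul_def]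
        _ = 1 - M := by
            rw [map_add, map_mul, map_pow, aeval_X, hMpow, zero_mul, add_zero,
              map_sub, map_one, aeval_X]
    rw [h1, h2, hMdef, smul_mul_assoc, one_mul, smul_sub, smul_smul]
    rw [mul_neg, mul_inv_cancel₀ hlam, neg_smul, one_smul, sub_neg_eq_add]
end

section
/- Suppose 1, ω₁, ..., ω_d ∈ ℝ form a ℚ-basis of a real algebraic number field Φ of degree d+1 over ℚ. Then the vector ω = (ω₁, ..., ω_d) is badly approximable: there exists K > 0 such that ‖m·ω‖ ≥ K/|m|^d for all nonzero m ∈ ℤ^d. -/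
set_option maxHeartbeats 1000000


/-- Perron's theorem: if `1, ω 1, …, ω d` form a `ℚ`-basis of a real algebraic number
field `Φ ⊆ ℝ` of degree `d + 1` over `ℚ`, then `ω` is badly approximable: there is
`K > 0` such that `|m·ω − p| ≥ K / |m|^d` for every nonzero `m ∈ ℤ^d` and every
integer `p`. -/
theorem perron_badly_approximable (d : ℕ) (ω : Fin d → ℝ)
    (Φ : Subfield ℝ) [FiniteDimensional ℚ Φ]
    (hdeg : Module.finrank ℚ Φ = d + 1)
    (b : Module.Basis (Fin (d + 1)) ℚ Φ)
    (hb : ∀ i : Fin (d + 1), (b i : ℝ) = (Fin.cons (1 : ℝ) ω : Fin (d + 1) → ℝ) i) :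
    ∃ K > (0 : ℝ), ∀ m : Fin d → ℤ, m ≠ 0 → ∀ p : ℤ,
      K / (Real.sqrt (∑ i, ((m i : ℝ)) ^ 2)) ^ d ≤ |(∑ i, (m i : ℝ) * ω i) - (p : ℝ)| := by
  classical
  letI : Fintype (Φ →ₐ[ℚ] ℂ) := minpoly.AlgHom.fintype ℚ Φ ℂ
  have hcard : Fintype.card (Φ →ₐ[ℚ] ℂ) = d + 1 := (AlgHom.card ℚ Φ ℂ).trans hdeg
  -- common denominator for the basis
  obtain ⟨y, hy0, hint⟩ := exists_integral_multiples ℤ ℚ (L := Φ) (Finset.univ.image b)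
  have hint' : ∀ j, IsIntegral ℤ (y • b j) := fun j =>
    hint _ (Finset.mem_image_of_mem b (Finset.mem_univ j))
  -- the real embedding
  let ι : Φ →ₐ[ℚ] ℂ := (Complex.ofRealHom.comp Φ.subtype).toRatAlgHom
  have hι : ∀ x : Φ, ι x = ((x : ℝ) : ℂ) := fun x => rfl
  -- constants
  set M : ℝ := 1 + ∑ σ : Φ →ₐ[ℚ] ℂ, ∑ j, ‖σ (b j)‖ with hMdef
  have hMsum : (0:ℝ) ≤ ∑ σ : Φ →ₐ[ℚ] ℂ, ∑ j, ‖σ (b j)‖ :=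
    Finset.sum_nonneg fun σ _ => Finset.sum_nonneg fun j _ => (norm_nonneg _)
  have hM1 : (1:ℝ) ≤ M := le_add_of_nonneg_right hMsum
  have hMb : ∀ (σ : Φ →ₐ[ℚ] ℂ) j, ‖σ (b j)‖ ≤ M := by
    intro σ j
    have h1 : ‖σ (b j)‖ ≤ ∑ j, ‖σ (b j)‖ :=
      Finset.single_le_sum (f := fun j => ‖σ (b j)‖)
        (fun j _ => norm_nonneg _) (Finset.mem_univ j)
    have h2 : (∑ j, ‖σ (b j)‖) ≤ ∑ σ : Φ →ₐ[ℚ] ℂ, ∑ j, ‖σ (b j)‖ :=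
      Finset.single_le_sum (f := fun σ : Φ →ₐ[ℚ] ℂ => ∑ j, ‖σ (b j)‖)
        (fun σ _ => Finset.sum_nonneg fun j _ => norm_nonneg _)
        (Finset.mem_univ σ)
    linarith
  set W : ℝ := ∑ i, |ω i| with hWdef
  have hW0 : 0 ≤ W := Finset.sum_nonneg fun i _ => abs_nonneg _
  set C : ℝ := M * (1 + W + d) with hCdef
  have hC1 : (1:ℝ) ≤ C := by
    have hd0 : (0:ℝ) ≤ d := Nat.cast_nonneg d
    nlinarith
  set Dr : ℝ := |(y:ℝ)| with hDrdef
  have hDr1 : (1:ℝ) ≤ Dr := by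
    have h : (1:ℤ) ≤ |y| := Int.one_le_abs hy0
    rw [hDrdef, ← Int.cast_abs]
    exact_mod_cast h
  have hDr0 : (0:ℝ) < Dr := lt_of_lt_of_le one_pos hDr1
  have hC0 : (0:ℝ) < C := lt_of_lt_of_le one_pos hC1
  have hKpos : (0:ℝ) < min 1 (1/(Dr^(d+1) * C^d)) :=
    lt_min one_pos (one_div_pos.mpr (mul_pos (pow_pos hDr0 _) (pow_pos hC0 _)))
  refine ⟨min 1 (1/(Dr^(d+1) * C^d)), hKpos, ?_⟩
  intro m hm p
  set nm : ℝ := Real.sqrt (∑ i, ((m i : ℝ)) ^ 2) with hnmdef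
  set x : ℝ := (∑ i, (m i : ℝ) * ω i) - (p : ℝ) with hxdef
  obtain ⟨i₀, hi₀⟩ := Function.ne_iff.mp hm
  have hi₀ : m i₀ ≠ 0 := by simpa using hi₀
  have hnm1 : (1:ℝ) ≤ nm := by
    have h1 : (1:ℝ) ≤ ((m i₀ : ℝ))^2 := by
      have h : (1:ℤ) ≤ |m i₀| := Int.one_le_abs hi₀
      have h2 : (1:ℝ) ≤ |(m i₀ : ℝ)| := by rw [← Int.cast_abs]; exact_mod_cast h
      rw [← sq_abs]
      nlinarith
    have h2 : ((m i₀ : ℝ))^2 ≤ ∑ i, ((m i : ℝ))^2 :=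
      Finset.single_le_sum (f := fun i => ((m i : ℝ))^2)
        (fun i _ => sq_nonneg _) (Finset.mem_univ i₀)
    have h3 := Real.sqrt_le_sqrt (le_trans h1 h2)
    rw [Real.sqrt_one] at h3
    exact h3
  have hnm0 : (0:ℝ) < nm := lt_of_lt_of_le one_pos hnm1
  have hmi : ∀ i, |(m i : ℝ)| ≤ nm := by
    intro i
    have h2 : ((m i : ℝ))^2 ≤ ∑ i, ((m i : ℝ))^2 :=
      Finset.single_le_sum (f := fun i => ((m i : ℝ))^2)
        (fun i _ => sq_nonneg _) (Finset.mem_univ i)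
    calc |(m i : ℝ)| = Real.sqrt (((m i : ℝ))^2) := (Real.sqrt_sq_eq_abs _).symm
      _ ≤ nm := Real.sqrt_le_sqrt h2
  have hnmd1 : (1:ℝ) ≤ nm ^ d := one_le_pow₀ hnm1
  have hnmd0 : (0:ℝ) < nm ^ d := lt_of_lt_of_le one_pos hnmd1
  by_cases hx1 : 1 ≤ |x|
  · calc min 1 (1/(Dr^(d+1) * C^d)) / nm ^ d ≤ 1 / nm ^ d := by
          exact (div_le_div_iff_of_pos_right hnmd0).mpr (min_le_left _ _)
      _ ≤ 1 / 1 := one_div_le_one_div_of_le one_pos hnmd1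
      _ ≤ |x| := by simpa using hx1
  push_neg at hx1
  -- the algebraic element
  set cz : Fin (d+1) → ℤ := Fin.cons (-p) m with hczdef
  set c : Fin (d+1) → ℚ := fun j => (cz j : ℚ) with hcdef
  set α : Φ := b.equivFun.symm c with hαdef
  have hα : α = ∑ j, c j • b j := b.equivFun_symm_apply c
  have hα0 : α ≠ 0 := by
    intro h
    have hc0 : c = 0 := (LinearEquiv.map_eq_zero_iff _).mp (hαdef ▸ h)
    have : c i₀.succ = 0 := congrFun hc0 _
    simp only [hcdef, hczdef, Fin.cons_succ] at this
    exact hi₀ (by exact_mod_cast this)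
  have hαR : ((α : ℝ)) = x := by
    have h1 : ((α : ℝ)) = ∑ j, (c j : ℝ) * ((b j : ℝ)) := by
      rw [hα]
      push_cast [Rat.smul_def]
      rfl
    rw [h1, Fin.sum_univ_succ]
    simp only [hcdef, hczdef, Fin.cons_succ, Fin.cons_zero, hb, hxdef]
    push_cast
    ring
  set β : Φ := y • α with hβdef
  have hβ : β = ∑ j, cz j • (y • b j) := by
    rw [hβdef, hα, Finset.smul_sum]
    refine Finset.sum_congr rfl fun j _ => ?_
    rw [hcdef, Int.cast_smul_eq_zsmul, smul_comm]
  have hβint : IsIntegral ℤ β := by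
    rw [hβ]
    refine IsIntegral.sum _ fun j _ => ?_
    rw [zsmul_eq_mul]
    exact (isIntegral_algebraMap (x := cz j)).mul (hint' j)
  have hβ0 : β ≠ 0 := smul_ne_zero hy0 hα0
  -- the norm is a nonzero integer
  have hN0 : Algebra.norm ℚ β ≠ 0 := Algebra.norm_ne_zero_iff.mpr hβ0
  obtain ⟨z, hz⟩ := IsIntegrallyClosed.isIntegral_iff.mp (Algebra.isIntegral_norm ℚ hβint)
  have hzN : ((z:ℚ)) = Algebra.norm ℚ β := by rw [← hz]; simp
  have hz0 : z ≠ 0 := by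
    rintro rfl
    exact hN0 (by exact_mod_cast hzN.symm)
  have h1N : (1:ℝ) ≤ |((Algebra.norm ℚ β : ℚ) : ℝ)| := by
    rw [← hzN]
    push_cast
    rw [← Int.cast_abs]
    exact_mod_cast Int.one_le_abs hz0
  -- the product formula
  have hprod : |((Algebra.norm ℚ β : ℚ) : ℝ)| = ∏ σ : Φ →ₐ[ℚ] ℂ, ‖σ β‖ := by
    have h1 : (algebraMap ℚ ℂ) (Algebra.norm ℚ β) = ∏ σ : Φ →ₐ[ℚ] ℂ, σ β :=
      Algebra.norm_eq_prod_embeddings ℚ ℂ β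
    have h2 : ‖(algebraMap ℚ ℂ) (Algebra.norm ℚ β)‖
        = |((Algebra.norm ℚ β : ℚ) : ℝ)| := by
      rw [show (algebraMap ℚ ℂ) (Algebra.norm ℚ β) = (((Algebra.norm ℚ β : ℚ) : ℝ) : ℂ) by
        push_cast; rfl, Complex.norm_real, Real.norm_eq_abs]
    rw [← h2, h1, norm_prod]
  -- bounds on the conjugates
  have hp_bound : |(p:ℝ)| ≤ 1 + W * nm := by
    have h1 : |∑ i, (m i : ℝ) * ω i| ≤ W * nm := by
      calc |∑ i, (m i : ℝ) * ω i| ≤ ∑ i, |(m i : ℝ) * ω i| := Finset.abs_sum_le_sum_abs _ _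
        _ ≤ ∑ i, nm * |ω i| := by
            refine Finset.sum_le_sum fun i _ => ?_
            rw [abs_mul]
            exact mul_le_mul_of_nonneg_right (hmi i) (abs_nonneg _)
        _ = W * nm := by rw [← Finset.mul_sum, hWdef]; ring
    have h2 : |(p:ℝ)| ≤ |∑ i, (m i : ℝ) * ω i| + |x| := by
      have h3 : (p:ℝ) = (∑ i, (m i : ℝ) * ω i) - x := by rw [hxdef]; ring
      rw [h3]
      exact abs_sub _ _
    linarith
  have hsum_cz : ∑ j, |(cz j : ℝ)| ≤ (1 + W + d) * nm := by
    rw [Fin.sum_univ_succ]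
    simp only [hczdef, Fin.cons_succ, Fin.cons_zero]
    have h1 : |((-p : ℤ) : ℝ)| ≤ 1 + W * nm := by push_cast; rw [abs_neg]; exact hp_bound
    have h2 : ∑ i : Fin d, |((m i : ℤ) : ℝ)| ≤ (d:ℝ) * nm := by
      calc (∑ i : Fin d, |((m i : ℤ) : ℝ)|) ≤ ∑ _i : Fin d, nm :=
            Finset.sum_le_sum fun i _ => hmi i
        _ = (d:ℝ) * nm := by rw [Finset.sum_const, Finset.card_univ, Fintype.card_fin,
              nsmul_eq_mul]
    nlinarith
  have hσ : ∀ σ : Φ →ₐ[ℚ] ℂ, ‖σ β‖ ≤ Dr * (C * nm) := by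
    intro σ
    have h1 : σ β = (y : ℂ) * σ α := by
      rw [hβdef, map_zsmul, zsmul_eq_mul]
    have h2 : ‖σ α‖ ≤ C * nm := by
      have h3 : σ α = ∑ j, ((cz j : ℂ)) * σ (b j) := by
        rw [hα, map_sum]
        refine Finset.sum_congr rfl fun j _ => ?_
        rw [Rat.smul_def, map_mul, map_ratCast, hcdef]
        push_cast
        ring
      calc ‖σ α‖ ≤ ∑ j, ‖(cz j : ℂ) * σ (b j)‖ := by
            rw [h3]; exact norm_sum_le _ _
        _ = ∑ j, |(cz j : ℝ)| * ‖σ (b j)‖ := by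
            refine Finset.sum_congr rfl fun j _ => ?_
            rw [norm_mul, Complex.norm_intCast]
        _ ≤ ∑ j, |(cz j : ℝ)| * M := by
            refine Finset.sum_le_sum fun j _ => ?_
            exact mul_le_mul_of_nonneg_left (hMb σ j) (abs_nonneg _)
        _ = (∑ j, |(cz j : ℝ)|) * M := by rw [← Finset.sum_mul]
        _ ≤ ((1 + W + d) * nm) * M :=
            mul_le_mul_of_nonneg_right hsum_cz (by linarith)
        _ = C * nm := by rw [hCdef]; ring
    calc ‖σ β‖ = Dr * ‖σ α‖ := by
          rw [h1, norm_mul, Complex.norm_intCast, hDrdef]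
      _ ≤ Dr * (C * nm) := mul_le_mul_of_nonneg_left h2 (le_of_lt hDr0)
  have hιβ : ‖ι β‖ = Dr * |x| := by
    rw [hι, Complex.norm_real, Real.norm_eq_abs]
    have h1 : ((β : ℝ)) = (y : ℝ) * (α : ℝ) := by
      rw [hβdef]
      push_cast [zsmul_eq_mul]
      rfl
    rw [h1, abs_mul, hαR, hDrdef]
  -- combine
  have hchain : (1:ℝ) ≤ (Dr * |x|) * (Dr * (C * nm))^d := by
    have hsplit : ∏ σ : Φ →ₐ[ℚ] ℂ, ‖σ β‖
        = ‖ι β‖ * ∏ σ ∈ Finset.univ.erase ι, ‖σ β‖ :=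
      (Finset.mul_prod_erase _ _ (Finset.mem_univ ι)).symm
    have hcard' : (Finset.univ.erase ι).card = d := by
      rw [Finset.card_erase_of_mem (Finset.mem_univ ι), Finset.card_univ, hcard]
      omega
    have hrest : (∏ σ ∈ Finset.univ.erase ι, ‖σ β‖) ≤ (Dr * (C * nm))^d := by
      calc (∏ σ ∈ Finset.univ.erase ι, ‖σ β‖)
          ≤ ∏ _σ ∈ Finset.univ.erase ι, (Dr * (C * nm)) :=
            Finset.prod_le_prod (fun σ _ => norm_nonneg _) (fun σ _ => hσ σ)
        _ = (Dr * (C * nm))^d := by rw [Finset.prod_const, hcard']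
    calc (1:ℝ) ≤ |((Algebra.norm ℚ β : ℚ) : ℝ)| := h1N
      _ = ‖ι β‖ * ∏ σ ∈ Finset.univ.erase ι, ‖σ β‖ := by
          rw [hprod, hsplit]
      _ = (Dr * |x|) * ∏ σ ∈ Finset.univ.erase ι, ‖σ β‖ := by rw [hιβ]
      _ ≤ (Dr * |x|) * (Dr * (C * nm))^d := by
          refine mul_le_mul_of_nonneg_left hrest ?_
          exact mul_nonneg (le_of_lt hDr0) (abs_nonneg _)
  have hA : (0:ℝ) < Dr * (Dr * (C * nm))^d :=
    mul_pos hDr0 (pow_pos (mul_pos hDr0 (mul_pos hC0 hnm0)) d)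
  clear_value M W C Dr nm x
  calc min 1 (1/(Dr^(d+1) * C^d)) / nm ^ d ≤ (1/(Dr^(d+1) * C^d)) / nm ^ d :=
        (div_le_div_iff_of_pos_right hnmd0).mpr (min_le_right _ _)
    _ = 1 / (Dr * (Dr * (C * nm))^d) := by
        rw [div_div]
        congr 1
        rw [mul_pow, mul_pow, pow_succ]
        ring
    _ ≤ |x| := by
        rw [div_le_iff₀ hA]
        calc (1:ℝ) ≤ (Dr * |x|) * (Dr * (C * nm))^d := hchain
          _ = |x| * (Dr * (Dr * (C * nm))^d) := by ring
end

section
/- Let ω₁ be a root of f(x) = x³ − 7x² + 14x − 7 and let ε₁ = 2 − 4ω₁ + ω₁² and ε₂ = −5 + 5ω₁ − ω₁². Then ε₁ and ε₂ are units in the ring ℤ[ω₁], i.e., they have multiplicative inverses in ℤ[ω₁]. -/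
/-- If `ω₁` is a real root of `f(x) = x³ − 7x² + 14x − 7`, then
`ε₁ = 2 − 4ω₁ + ω₁²` and `ε₂ = −5 + 5ω₁ − ω₁²` are units of the ring `ℤ[ω₁]`:
they have multiplicative inverses in `ℤ[ω₁]`. -/
theorem units_in_Z_omega (ω₁ : ℝ) (hω : ω₁ ^ 3 - 7 * ω₁ ^ 2 + 14 * ω₁ - 7 = 0) :
    (2 - 4 * ω₁ + ω₁ ^ 2 ∈ Algebra.adjoin ℤ ({ω₁} : Set ℝ)) ∧
    (-5 + 5 * ω₁ - ω₁ ^ 2 ∈ Algebra.adjoin ℤ ({ω₁} : Set ℝ)) ∧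
    (∃ b ∈ Algebra.adjoin ℤ ({ω₁} : Set ℝ), (2 - 4 * ω₁ + ω₁ ^ 2) * b = 1) ∧
    (∃ b ∈ Algebra.adjoin ℤ ({ω₁} : Set ℝ), (-5 + 5 * ω₁ - ω₁ ^ 2) * b = 1) := by
  set A := Algebra.adjoin ℤ ({ω₁} : Set ℝ) with hA
  have hmem : ω₁ ∈ A := Algebra.subset_adjoin (Set.mem_singleton ω₁)
  have hc : ∀ n : ℤ, ((n : ℝ) ∈ A) := fun n => Subalgebra.intCast_mem A n
  have h2 : (2:ℝ) ∈ A := by exact_mod_cast hc 2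
  have h3 : (3:ℝ) ∈ A := by exact_mod_cast hc 3
  have h4 : (4:ℝ) ∈ A := by exact_mod_cast hc 4
  have h5 : (5:ℝ) ∈ A := by exact_mod_cast hc 5
  refine ⟨?_, ?_, ⟨ω₁ - 3, Subalgebra.sub_mem _ hmem h3, by linear_combination hω⟩,
    ⟨-3 + 4 * ω₁ - ω₁ ^ 2, ?_, by linear_combination (ω₁ - 2) * hω⟩⟩
  · exact Subalgebra.add_mem _ (Subalgebra.sub_mem _ h2
      (Subalgebra.mul_mem _ h4 hmem)) (Subalgebra.pow_mem _ hmem 2)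
  · exact Subalgebra.sub_mem _ (Subalgebra.add_mem _ (Subalgebra.neg_mem _ h5)
      (Subalgebra.mul_mem _ h5 hmem)) (Subalgebra.pow_mem _ hmem 2)
  · exact Subalgebra.sub_mem _ (Subalgebra.add_mem _ (Subalgebra.neg_mem _ h3)
      (Subalgebra.mul_mem _ h4 hmem)) (Subalgebra.pow_mem _ hmem 2)
end

section
/- Let R ⊂ ℝ^d be a bounded convex set and let v, v' ∈ ℝ^d. Then the volume of the symmetric difference of the translates R − v and R − v' is bounded by a constant (depending only on R and d) times |v − v'|, where |·| is the Euclidean norm. Consequently the map v ↦ vol(R ∩ (R − v)) is Lipschitz continuous. -/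
open MeasureTheory Set Pointwise

namespace TranslateAux

variable {d : ℕ}

lemma mem_subImage (R : Set (EuclideanSpace ℝ (Fin d))) (w x : EuclideanSpace ℝ (Fin d)) :
    x ∈ (fun y => y - w) '' R ↔ x + w ∈ R := by
  constructor
  · rintro ⟨y, hy, rfl⟩; simpa using hy
  · intro h; exact ⟨x + w, h, add_sub_cancel_right x w⟩

lemma vol_image_sub (S : Set (EuclideanSpace ℝ (Fin d))) (w : EuclideanSpace ℝ (Fin d)) :
    volume ((fun y => y - w) '' S) = volume S := by
  have h : (fun y => y - w) '' S = (fun y => y + w) ⁻¹' S := by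
    ext x
    rw [mem_preimage, mem_subImage]
  rw [h, measure_preimage_add_right]

lemma key (R : Set (EuclideanSpace ℝ (Fin d))) (hconv : Convex ℝ R)
    (hfin : volume R ≠ ⊤) (p : EuclideanSpace ℝ (Fin d)) (r : ℝ) (hr : 0 < r)
    (hball : Metric.ball p r ⊆ R) (w : EuclideanSpace ℝ (Fin d)) :
    (volume (R \ ((fun y => y - w) '' R))).toReal ≤
      ((2 * d + 2) * (volume R).toReal / r) * ‖w‖ := by
  set V : ℝ := (volume R).toReal with hVdef
  have hV0 : 0 ≤ V := ENNReal.toReal_nonneg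
  have hd0 : (0 : ℝ) ≤ (d : ℝ) := Nat.cast_nonneg d
  have hw0 : 0 ≤ ‖w‖ := norm_nonneg w
  by_cases hbig : r / 2 ≤ ‖w‖
  · -- trivial bound by the total volume
    have h1 : (volume (R \ ((fun y => y - w) '' R))).toReal ≤ V :=
      ENNReal.toReal_mono hfin (measure_mono diff_subset)
    have h2 : (1 : ℝ) ≤ (2 * d + 2) / r * ‖w‖ := by
      have : (2 : ℝ) / r * (r / 2) = 1 := by field_simp
      calc (1 : ℝ) = 2 / r * (r / 2) := this.symm
        _ ≤ (2 * d + 2) / r * ‖w‖ := by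
            gcongr
            linarith
    calc (volume (R \ ((fun y => y - w) '' R))).toReal ≤ V := h1
      _ = 1 * V := (one_mul V).symm
      _ ≤ ((2 * d + 2) / r * ‖w‖) * V := by
          apply mul_le_mul_of_nonneg_right h2 hV0
      _ = (2 * d + 2) * V / r * ‖w‖ := by ring
  · push_neg at hbig
    by_cases hw : w = 0
    · subst hw
      simp only [sub_zero, image_id']
      simp only [norm_zero, mul_zero]
      simp [hV0]
    · have hwpos : 0 < ‖w‖ := norm_pos_iff.2 hw
      set t : ℝ := 2 * ‖w‖ / r with htdef
      have ht0 : 0 < t := by positivity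
      have ht1 : t < 1 := by
        rw [htdef, div_lt_one hr]; linarith
      set S : Set (EuclideanSpace ℝ (Fin d)) :=
        (fun x => (1 - t) • x + t • p) '' R with hSdef
      have hp : p ∈ R := hball (Metric.mem_ball_self hr)
      have hSR : S ⊆ R := by
        rintro _ ⟨x, hx, rfl⟩
        exact hconv hx hp (by linarith) ht0.le (by ring)
      have hST : S ⊆ (fun y => y - w) '' R := by
        rintro _ ⟨x, hx, rfl⟩
        rw [mem_subImage]
        have hmem : p + t⁻¹ • w ∈ Metric.ball p r := by
          rw [Metric.mem_ball, dist_eq_norm]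
          have : p + t⁻¹ • w - p = t⁻¹ • w := by abel
          rw [this, norm_smul, Real.norm_eq_abs, abs_of_pos (inv_pos.2 ht0)]
          rw [htdef]
          rw [inv_div, div_mul_eq_mul_div, mul_comm]
          rw [div_lt_iff₀ (by positivity)]
          nlinarith
        have heq : (1 - t) • x + t • p + w = (1 - t) • x + t • (p + t⁻¹ • w) := by
          rw [smul_add, smul_inv_smul₀ ht0.ne']
          abel
        rw [heq]
        exact hconv hx (hball hmem) (by linarith) ht0.le (by ring)
      have hSvol : volume S = ENNReal.ofReal ((1 - t) ^ d) * volume R := by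
        have h1 : S = (fun y => y - (-(t • p))) '' ((1 - t) • R) := by
          rw [← Set.image_smul, ← Set.image_comp]
          apply image_congr
          intro x _
          simp [sub_neg_eq_add]
        rw [h1, vol_image_sub, Measure.addHaar_smul, finrank_euclideanSpace_fin,
          abs_of_nonneg (pow_nonneg (by linarith : (0:ℝ) ≤ 1 - t) d)]
      have hSconv : Convex ℝ S := by
        have h1 : S = (fun y => t • p + y) '' ((1 - t) • R) := by
          rw [← Set.image_smul, ← Set.image_comp]
          apply image_congr
          intro x _
          simp [add_comm]
        rw [h1]
        exact (hconv.smul (1 - t)).translate (t • p)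
      have hSle : volume S ≤ volume R := measure_mono hSR
      have hSfin : volume S ≠ ⊤ := (lt_of_le_of_lt hSle hfin.lt_top).ne
      have hdiff : volume (R \ S) = volume R - volume S :=
        measure_diff hSR (hSconv.nullMeasurableSet _) hSfin
      have hmono : volume (R \ ((fun y => y - w) '' R)) ≤ volume (R \ S) :=
        measure_mono (diff_subset_diff_right hST)
      have hfindiff : volume (R \ S) ≠ ⊤ := by
        rw [hdiff]; exact (tsub_le_self.trans_lt hfin.lt_top).ne
      have hto : (volume (R \ ((fun y => y - w) '' R))).toReal ≤
          V - (1 - t) ^ d * V := by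
        have h2 : (volume (R \ S)).toReal = V - (volume S).toReal := by
          rw [hdiff, ENNReal.toReal_sub_of_le hSle hfin]
        have h3 : (volume S).toReal = (1 - t) ^ d * V := by
          rw [hSvol, ENNReal.toReal_mul, ENNReal.toReal_ofReal (pow_nonneg (by linarith) d)]
        calc (volume (R \ ((fun y => y - w) '' R))).toReal
            ≤ (volume (R \ S)).toReal := ENNReal.toReal_mono hfindiff hmono
          _ = V - (1 - t) ^ d * V := by rw [h2, h3]
      have hbern : 1 - (d : ℝ) * t ≤ (1 - t) ^ d := by
        have := one_add_mul_le_pow (a := -t) (by linarith) d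
        calc 1 - (d : ℝ) * t = 1 + d * (-t) := by ring
          _ ≤ (1 + -t) ^ d := this
          _ = (1 - t) ^ d := by ring_nf
      calc (volume (R \ ((fun y => y - w) '' R))).toReal
          ≤ V - (1 - t) ^ d * V := hto
        _ ≤ V - (1 - d * t) * V := by nlinarith
        _ = (d : ℝ) * t * V := by ring
        _ = 2 * d * V / r * ‖w‖ := by rw [htdef]; ring
        _ ≤ (2 * d + 2) * V / r * ‖w‖ := by
            gcongr
            nlinarith


lemma diff_translate (R : Set (EuclideanSpace ℝ (Fin d))) (v v' : EuclideanSpace ℝ (Fin d)) :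
    ((fun x => x - v) '' R) \ ((fun x => x - v') '' R) =
      (fun x => x - v) '' (R \ ((fun y => y - (v' - v)) '' R)) := by
  have hx : ∀ x : EuclideanSpace ℝ (Fin d), x + v + (v' - v) = x + v' := by
    intro x; rw [add_assoc, add_comm v, sub_add_cancel]
  ext x
  rw [Set.mem_diff, mem_subImage, mem_subImage, mem_subImage, Set.mem_diff, mem_subImage, hx]

end TranslateAux

open TranslateAux in
/-- If `R ⊂ ℝ^d` is a bounded convex set, then the volume of the symmetric difference of
the translates `R − v` and `R − v'` is at most a constant (depending only on `R` and `d`)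
times `|v − v'|`; consequently `v ↦ vol (R ∩ (R − v))` is Lipschitz continuous. -/
theorem translate_symmDiff_volume_lipschitz (d : ℕ) (R : Set (EuclideanSpace ℝ (Fin d)))
    (hconv : Convex ℝ R) (hbdd : Bornology.IsBounded R) :
    (∃ C > (0 : ℝ), ∀ v v' : EuclideanSpace ℝ (Fin d),
        (volume (symmDiff ((fun x => x - v) '' R) ((fun x => x - v') '' R))).toReal ≤
          C * ‖v - v'‖) ∧
      ∃ C : NNReal, LipschitzWith C
        (fun v : EuclideanSpace ℝ (Fin d) =>
          (volume (R ∩ ((fun x => x - v) '' R))).toReal) := by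
  have hfin : volume R ≠ ⊤ := hbdd.measure_lt_top.ne
  -- the symmetric-difference bound
  have main : ∃ C > (0 : ℝ), ∀ v v' : EuclideanSpace ℝ (Fin d),
      (volume (symmDiff ((fun x => x - v) '' R) ((fun x => x - v') '' R))).toReal ≤
        C * ‖v - v'‖ := by
    by_cases hzero : volume R = 0
    · refine ⟨1, one_pos, fun v v' => ?_⟩
      have h1 : volume (symmDiff ((fun x => x - v) '' R) ((fun x => x - v') '' R)) = 0 := by
        refine measure_mono_null (Set.symmDiff_subset_union) ?_
        refine measure_union_null ?_ ?_ <;> rw [vol_image_sub] <;> exact hzero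
      rw [h1]
      simp [norm_nonneg]

    · -- positive volume: `R` has an interior point
      have hint : (interior R).Nonempty := by
        by_contra h
        rw [Set.not_nonempty_iff_eq_empty] at h
        have hspan : affineSpan ℝ R ≠ ⊤ := by
          intro htop
          rw [← hconv.interior_nonempty_iff_affineSpan_eq_top] at htop
          rw [h] at htop
          exact Set.not_nonempty_empty htop
        exact hzero (measure_mono_null (subset_affineSpan ℝ R)
          (Measure.addHaar_affineSubspace volume _ hspan))
      obtain ⟨p, hp⟩ := hint
      obtain ⟨r, hr, hball⟩ := Metric.isOpen_iff.1 isOpen_interior p hp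
      replace hball : Metric.ball p r ⊆ R := hball.trans interior_subset
      set V : ℝ := (volume R).toReal with hVdef
      have hVpos : 0 < V := ENNReal.toReal_pos hzero hfin
      refine ⟨2 * ((2 * d + 2) * V / r), by positivity, fun v v' => ?_⟩
      set A := (fun x => x - v) '' R with hA
      set B := (fun x => x - v') '' R with hB
      have hab : volume (A \ B) = volume (R \ ((fun y => y - (v' - v)) '' R)) := by
        rw [hA, hB, diff_translate, vol_image_sub]
      have hba : volume (B \ A) = volume (R \ ((fun y => y - (v - v')) '' R)) := by
        rw [hA, hB, diff_translate, vol_image_sub]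
      have hfa : volume (A \ B) ≠ ⊤ := by
        rw [hab]; exact ((measure_mono diff_subset).trans_lt hfin.lt_top).ne
      have hfb : volume (B \ A) ≠ ⊤ := by
        rw [hba]; exact ((measure_mono diff_subset).trans_lt hfin.lt_top).ne
      have h1 : (volume (symmDiff A B)).toReal ≤
          (volume (A \ B)).toReal + (volume (B \ A)).toReal := by
        calc (volume (symmDiff A B)).toReal
            ≤ (volume (A \ B) + volume (B \ A)).toReal := by
              apply ENNReal.toReal_mono (ENNReal.add_ne_top.2 ⟨hfa, hfb⟩)
              rw [Set.symmDiff_def]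
              exact measure_union_le _ _
          _ = (volume (A \ B)).toReal + (volume (B \ A)).toReal :=
              ENNReal.toReal_add hfa hfb
      have h2 : (volume (A \ B)).toReal ≤ (2 * d + 2) * V / r * ‖v - v'‖ := by
        rw [hab]
        have := key R hconv hfin p r hr hball (v' - v)
        rwa [norm_sub_rev] at this
      have h3 : (volume (B \ A)).toReal ≤ (2 * d + 2) * V / r * ‖v - v'‖ := by
        rw [hba]
        exact key R hconv hfin p r hr hball (v - v')
      calc (volume (symmDiff A B)).toReal
          ≤ (volume (A \ B)).toReal + (volume (B \ A)).toReal := h1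
        _ ≤ (2 * d + 2) * V / r * ‖v - v'‖ + (2 * d + 2) * V / r * ‖v - v'‖ := by
            linarith
        _ = 2 * ((2 * d + 2) * V / r) * ‖v - v'‖ := by ring
  refine ⟨main, ?_⟩
  obtain ⟨C, hCpos, hC⟩ := main
  refine ⟨⟨C, hCpos.le⟩, LipschitzWith.of_dist_le_mul fun v v' => ?_⟩
  have step : ∀ a b : EuclideanSpace ℝ (Fin d),
      (volume (R ∩ ((fun x => x - a) '' R))).toReal ≤
        (volume (R ∩ ((fun x => x - b) '' R))).toReal + C * ‖a - b‖ := by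
    intro a b
    set Ta := (fun x => x - a) '' R
    set Tb := (fun x => x - b) '' R
    have hTa : volume Ta = volume R := vol_image_sub R a
    have hTb : volume Tb = volume R := vol_image_sub R b
    have hsub : R ∩ Ta ⊆ (R ∩ Tb) ∪ (Ta \ Tb) := by
      rintro x ⟨h1, h2⟩
      by_cases h3 : x ∈ Tb
      · exact Or.inl ⟨h1, h3⟩
      · exact Or.inr ⟨h2, h3⟩
    have hf1 : volume (R ∩ Tb) ≠ ⊤ :=
      ((measure_mono Set.inter_subset_left).trans_lt hfin.lt_top).ne
    have hf2 : volume (Ta \ Tb) ≠ ⊤ := by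
      refine ((measure_mono diff_subset).trans_lt ?_).ne
      rw [hTa]; exact hfin.lt_top
    have hfsymm : volume (symmDiff Ta Tb) ≠ ⊤ := by
      rw [Set.symmDiff_def]
      refine ((measure_union_le _ _).trans_lt ?_).ne
      refine ENNReal.add_lt_top.2 ⟨?_, ?_⟩
      · exact (measure_mono diff_subset).trans_lt (by rw [hTa]; exact hfin.lt_top)
      · exact (measure_mono diff_subset).trans_lt (by rw [hTb]; exact hfin.lt_top)
    calc (volume (R ∩ Ta)).toReal
        ≤ (volume (R ∩ Tb) + volume (Ta \ Tb)).toReal := by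
          apply ENNReal.toReal_mono (ENNReal.add_ne_top.2 ⟨hf1, hf2⟩)
          exact (measure_mono hsub).trans (measure_union_le _ _)
      _ = (volume (R ∩ Tb)).toReal + (volume (Ta \ Tb)).toReal :=
          ENNReal.toReal_add hf1 hf2
      _ ≤ (volume (R ∩ Tb)).toReal + (volume (symmDiff Ta Tb)).toReal := by
          have hmle : volume (Ta \ Tb) ≤ volume (symmDiff Ta Tb) :=
            measure_mono (by rw [Set.symmDiff_def]; exact Set.subset_union_left)
          have := ENNReal.toReal_mono hfsymm hmle
          linarith
      _ ≤ (volume (R ∩ Tb)).toReal + C * ‖a - b‖ := by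
          have := hC a b
          linarith
  rw [Real.dist_eq]
  change _ ≤ C * dist v v'
  rw [dist_eq_norm]
  rw [abs_sub_le_iff]
  constructor
  · have := step v v'
    linarith
  · have h := step v' v
    rw [norm_sub_rev] at h
    linarith
end

section
/- Let L be a complex n×n matrix such that for each standard basis vector e_i, the function t ↦ |exp((log t)(L − I)) e_i| is bounded above and below by positive constants for all t ≥ 1. Then every eigenvalue of L − I has nonpositive real part, and at least one eigenvalue of L − I is purely imaginary (has real part zero). -/
open NormedSpace

section Aux
open Matrix Polynomial Filter

attribute [local instance] Matrix.linftyOpNormedRing Matrix.linftyOpNormedAlgebra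

variable {n : ℕ}

private lemma aux_toLinAlgEquiv_apply_eq (A : Matrix (Fin n) (Fin n) ℂ) (v : Fin n → ℂ) :
    (Matrix.toLinAlgEquiv (Pi.basisFun ℂ (Fin n)) A) v = A.mulVec v := by
  simp only [Matrix.toLinAlgEquiv_apply, Matrix.toLin_eq_toLin', Matrix.toLin'_apply]
  have hrepr : ⇑((Pi.basisFun ℂ (Fin n)).repr v) = v :=
    funext fun i => Pi.basisFun_repr ℂ (Fin n) v i
  rw [hrepr]
  ext i
  simp [Pi.single_apply, mul_ite, Finset.sum_ite_eq, Finset.sum_ite_eq']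

private lemma aux_spectrum_iff_eigen (A : Matrix (Fin n) (Fin n) ℂ) (μ : ℂ) :
    μ ∈ spectrum ℂ A ↔ ∃ v, v ≠ 0 ∧ A.mulVec v = μ • v := by
  rw [← AlgEquiv.spectrum_eq (Matrix.toLinAlgEquiv <| Pi.basisFun ℂ (Fin n)),
    ← Module.End.hasEigenvalue_iff_mem_spectrum]
  constructor
  · intro h
    obtain ⟨v, hv⟩ := h.exists_hasEigenvector
    exact ⟨v, hv.right, by rw [← aux_toLinAlgEquiv_apply_eq, hv.apply_eq_smul]⟩
  · rintro ⟨v, hv0, hv⟩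
    exact Module.End.hasEigenvalue_of_hasEigenvector
      ⟨Module.End.mem_eigenspace_iff.mpr (by rw [aux_toLinAlgEquiv_apply_eq, hv]), hv0⟩

private lemma aux_pow_mulVec_eigen (A : Matrix (Fin n) (Fin n) ℂ) (v : Fin n → ℂ) (μ : ℂ)
    (hv : A.mulVec v = μ • v) (k : ℕ) : (A ^ k).mulVec v = μ ^ k • v := by
  induction k with
  | zero => simp
  | succ k ih =>
    rw [pow_succ, pow_succ, ← Matrix.mulVec_mulVec, hv, Matrix.mulVec_smul, ih, smul_smul,
      mul_comm]

private lemma aux_exp_mulVec_eigen (A : Matrix (Fin n) (Fin n) ℂ) (v : Fin n → ℂ) (μ : ℂ)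
    (hv : A.mulVec v = μ • v) : (exp A).mulVec v = Complex.exp μ • v := by
  classical
  let f : Matrix (Fin n) (Fin n) ℂ →ₗ[ℂ] (Fin n → ℂ) :=
    { toFun := fun M => M.mulVec v
      map_add' := fun M N => Matrix.add_mulVec M N v
      map_smul' := fun c M => Matrix.smul_mulVec c M v }
  let F := LinearMap.toContinuousLinearMap f
  have hF : ∀ M, F M = M.mulVec v := fun M => rfl
  have hsum : Summable fun k : ℕ => ((k.factorial : ℂ))⁻¹ • A ^ k := expSeries_summable' A
  have h1 : (exp A).mulVec v = ∑' k : ℕ, ((k.factorial : ℂ))⁻¹ • (A ^ k).mulVec v := by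
    rw [← hF, exp_eq_tsum ℂ]
    rw [ContinuousLinearMap.map_tsum F hsum]
    simp only [_root_.map_smul, hF]
    simp_rw [Matrix.smul_mulVec]
  have h2 : ∀ k : ℕ, ((k.factorial : ℂ))⁻¹ • (A ^ k).mulVec v
      = (((k.factorial : ℂ))⁻¹ * μ ^ k) • v := by
    intro k
    rw [aux_pow_mulVec_eigen A v μ hv k, smul_smul]
  rw [h1]
  simp_rw [h2]
  have hs2 : Summable fun k : ℕ => ((k.factorial : ℂ))⁻¹ * μ ^ k := by
    simpa [smul_eq_mul] using expSeries_summable' (𝕂 := ℂ) μ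
  rw [hs2.tsum_smul_const]
  congr 1
  rw [Complex.exp_eq_exp_ℂ, exp_eq_tsum ℂ]
  simp [smul_eq_mul]

private lemma aux_aeval_mulVec_eigen (A : Matrix (Fin n) (Fin n) ℂ) (v : Fin n → ℂ) (μ : ℂ)
    (hv : A.mulVec v = μ • v) (p : ℂ[X]) :
    (aeval A p).mulVec v = p.eval μ • v := by
  induction p using Polynomial.induction_on' with
  | add p q hp hq => rw [map_add, Matrix.add_mulVec, hp, hq, eval_add, add_smul]
  | monomial k a =>
    rw [aeval_monomial, eval_monomial]
    rw [show algebraMap ℂ _ a * A ^ k = a • A ^ k by rw [Algebra.smul_def],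
      Matrix.smul_mulVec, aux_pow_mulVec_eigen A v μ hv k, smul_smul]

private lemma aux_entry_le_linfty (M : Matrix (Fin n) (Fin n) ℂ) (i j : Fin n) :
    ‖M i j‖ ≤ ‖M‖ := by
  rw [← coe_nnnorm, ← coe_nnnorm M]
  rw [NNReal.coe_le_coe, Matrix.linfty_opNNNorm_def]
  calc ‖M i j‖₊ ≤ ∑ k, ‖M i k‖₊ :=
        Finset.single_le_sum (f := fun k => ‖M i k‖₊) (fun _ _ => zero_le) (Finset.mem_univ j)
    _ ≤ _ := Finset.le_sup (f := fun i => ∑ k, ‖M i k‖₊) (Finset.mem_univ i)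

private lemma aux_exp_mem_adjoin (A : Matrix (Fin n) (Fin n) ℂ) :
    exp A ∈ Algebra.adjoin ℂ {A} := by
  let S := Subalgebra.toSubmodule (Algebra.adjoin ℂ {A})
  have hS : IsClosed (S : Set (Matrix (Fin n) (Fin n) ℂ)) :=
    Submodule.closed_of_finiteDimensional S
  have hsum : HasSum (fun k : ℕ => ((k.factorial : ℂ))⁻¹ • A ^ k) (exp A) := by
    rw [exp_eq_tsum ℂ]
    exact (expSeries_summable' A).hasSum
  refine hS.mem_of_tendsto hsum (Filter.Eventually.of_forall fun s => ?_)
  exact Submodule.sum_mem S fun k _ => Submodule.smul_mem S _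
    (show A ^ k ∈ Algebra.adjoin ℂ {A} from
      pow_mem (Algebra.self_mem_adjoin_singleton ℂ A) k)

private lemma aux_spectrum_exp [NeZero n] (A : Matrix (Fin n) (Fin n) ℂ) :
    spectrum ℂ (exp A) = Complex.exp '' spectrum ℂ A := by
  obtain ⟨q, hq⟩ := (Algebra.adjoin_singleton_eq_range_aeval ℂ A ▸ aux_exp_mem_adjoin A : _)
  rw [show (aeval A).toRingHom q = aeval A q from rfl] at hq
  rw [← hq, spectrum.map_polynomial_aeval]
  refine Set.image_congr fun μ hμ => ?_
  obtain ⟨v, hv0, hv⟩ := (aux_spectrum_iff_eigen A μ).mp hμ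
  have h1 := aux_aeval_mulVec_eigen A v μ hv q
  rw [hq, aux_exp_mulVec_eigen A v μ hv] at h1
  exact smul_left_injective ℂ hv0 h1.symm

end Aux

/-- Let `L` be a complex `n × n` matrix such that for each standard basis vector `eᵢ`
the norm `|exp ((log t) • (L − I)) eᵢ|` is bounded above and below by positive constants
for all `t ≥ 1`.  Then every eigenvalue of `L − I` has nonpositive real part, and at
least one eigenvalue of `L − I` is purely imaginary. -/
theorem eigenvalues_nonpositive_real_part (n : ℕ) (hn : 0 < n)
    (L : Matrix (Fin n) (Fin n) ℂ) (C₁ C₂ : ℝ) (hC₁ : 0 < C₁) (hC₁₂ : C₁ ≤ C₂)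
    (hbound : ∀ t : ℝ, 1 ≤ t → ∀ i : Fin n,
      C₁ ≤ Real.sqrt (∑ j, ‖(NormedSpace.exp ((Real.log t : ℂ) • (L - 1))).mulVec
              (Pi.single i 1) j‖ ^ 2) ∧
      Real.sqrt (∑ j, ‖(NormedSpace.exp ((Real.log t : ℂ) • (L - 1))).mulVec
              (Pi.single i 1) j‖ ^ 2) ≤ C₂) :
    (∀ μ ∈ spectrum ℂ (L - 1), μ.re ≤ 0) ∧ ∃ μ ∈ spectrum ℂ (L - 1), μ.re = 0 := by
  classical
  haveI : NeZero n := ⟨hn.ne'⟩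
  letI : NormedRing (Matrix (Fin n) (Fin n) ℂ) := Matrix.linftyOpNormedRing
  letI : NormedAlgebra ℂ (Matrix (Fin n) (Fin n) ℂ) := Matrix.linftyOpNormedAlgebra
  set A := L - 1 with hA
  -- entrywise upper bound on exp (s • A)
  have hentry : ∀ s : ℝ, 0 ≤ s → ∀ i j : Fin n,
      ‖(NormedSpace.exp ((s : ℂ) • A)) j i‖ ≤ C₂ := by
    intro s hs i j
    have ht : (1 : ℝ) ≤ Real.exp s := Real.one_le_exp hs
    have hb := (hbound (Real.exp s) ht i).2
    rw [Real.log_exp] at hb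
    set M := NormedSpace.exp ((s : ℂ) • A) with hM
    have h1 : M.mulVec (Pi.single i 1) j = M j i := by
      simp [Matrix.mulVec_single]
    calc ‖M j i‖
        = Real.sqrt (‖M j i‖ ^ 2) :=
          (Real.sqrt_sq (norm_nonneg _)).symm
      _ ≤ Real.sqrt (∑ j', ‖M.mulVec (Pi.single i 1) j'‖ ^ 2) := by
          apply Real.sqrt_le_sqrt
          rw [← h1]
          exact Finset.single_le_sum
            (f := fun j' => ‖M.mulVec (Pi.single i 1) j'‖ ^ 2)
            (fun _ _ => sq_nonneg _) (Finset.mem_univ j)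
      _ ≤ C₂ := hb
  -- Part 1: all eigenvalues have nonpositive real part
  have part1 : ∀ μ ∈ spectrum ℂ A, μ.re ≤ 0 := by
    intro μ hμ
    obtain ⟨v, hv0, hv⟩ := (aux_spectrum_iff_eigen A μ).mp hμ
    obtain ⟨j, hj⟩ := Function.ne_iff.mp hv0
    have hvj : 0 < ‖v j‖ := by
      simpa [norm_pos_iff] using hj
    set K := (C₂ * ∑ i, ‖v i‖) / ‖v j‖ with hK
    have hKb : ∀ s : ℝ, 0 ≤ s → Real.exp (s * μ.re) ≤ K := by
      intro s hs
      have heig : ((s : ℂ) • A).mulVec v = ((s : ℂ) * μ) • v := by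
        rw [Matrix.smul_mulVec, hv, smul_smul]
      have hexp := aux_exp_mulVec_eigen _ v _ heig
      have hcomp : Complex.exp ((s : ℂ) * μ) * v j
          = ∑ i, (NormedSpace.exp ((s : ℂ) • A)) j i * v i := by
        have h := congrFun hexp j
        simp only [Matrix.mulVec, dotProduct, Pi.smul_apply, smul_eq_mul] at h
        exact h.symm
      have habs : Real.exp (s * μ.re) * ‖v j‖ ≤ C₂ * ∑ i, ‖v i‖ := by
        have h1 : Real.exp (s * μ.re) * ‖v j‖
            = ‖Complex.exp ((s : ℂ) * μ) * v j‖ := by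
          rw [norm_mul, Complex.norm_exp]
          congr 2
          simp [Complex.mul_re]
        rw [h1, hcomp]
        calc ‖∑ i, (NormedSpace.exp ((s : ℂ) • A)) j i * v i‖
            ≤ ∑ i, ‖(NormedSpace.exp ((s : ℂ) • A)) j i * v i‖ :=
              norm_sum_le _ _
          _ ≤ ∑ i, C₂ * ‖v i‖ := by
              apply Finset.sum_le_sum
              intro i _
              rw [norm_mul]
              exact mul_le_mul_of_nonneg_right (hentry s hs i j) (norm_nonneg _)
          _ = C₂ * ∑ i, ‖v i‖ := by rw [Finset.mul_sum]
      rw [hK, le_div_iff₀ hvj]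
      exact habs
    by_contra hpos
    push_neg at hpos
    have hK0 : 0 < K := lt_of_lt_of_le (by simpa using Real.exp_pos 0) (hKb 0 le_rfl)
    set s₀ := (|Real.log K| + 1) / μ.re with hs₀
    have hs₀0 : 0 ≤ s₀ := le_of_lt (div_pos (by positivity) hpos)
    have h1 : s₀ * μ.re = |Real.log K| + 1 := div_mul_cancel₀ _ (ne_of_gt hpos)
    have h2 : Real.log K < s₀ * μ.re := by
      rw [h1]
      calc Real.log K ≤ |Real.log K| := le_abs_self _
        _ < |Real.log K| + 1 := by linarith
    have h3 : K < Real.exp (s₀ * μ.re) := by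
      calc K = Real.exp (Real.log K) := (Real.exp_log hK0).symm
        _ < Real.exp (s₀ * μ.re) := Real.exp_lt_exp.mpr h2
    exact absurd (hKb s₀ hs₀0) (not_le.mpr h3)
  refine ⟨part1, ?_⟩
  -- Part 2: some eigenvalue has zero real part
  by_contra hno
  push_neg at hno
  have hneg : ∀ μ ∈ spectrum ℂ A, μ.re < 0 := fun μ hμ =>
    lt_of_le_of_ne (part1 μ hμ) (hno μ hμ)
  set B := NormedSpace.exp A with hB
  have hσ : spectrum ℂ B = Complex.exp '' spectrum ℂ A := aux_spectrum_exp A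
  have hρ : spectralRadius ℂ B < (1 : NNReal) := by
    apply spectrum.spectralRadius_lt_of_forall_lt
    intro z hz
    rw [hσ] at hz
    obtain ⟨μ, hμ, rfl⟩ := hz
    rw [← NNReal.coe_lt_coe, coe_nnnorm, NNReal.coe_one, Complex.norm_exp]
    calc Real.exp μ.re < Real.exp 0 := Real.exp_lt_exp.mpr (hneg μ hμ)
      _ = 1 := Real.exp_zero
  obtain ⟨c, hc1, hc2⟩ := ENNReal.lt_iff_exists_nnreal_btwn.mp hρ
  have hc2' : (c : ℝ) < 1 := by
    have := ENNReal.coe_lt_coe.mp hc2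
    exact_mod_cast this
  have htend := spectrum.pow_nnnorm_pow_one_div_tendsto_nhds_spectralRadius B
  have hev : ∀ᶠ m : ℕ in Filter.atTop,
      (‖B ^ m‖₊ : ENNReal) ^ (1 / (m : ℝ)) < (c : ENNReal) :=
    htend.eventually_lt_const hc1
  have hnorm : ∀ᶠ m : ℕ in Filter.atTop, ‖B ^ m‖ ≤ (c : ℝ) ^ m := by
    filter_upwards [hev, Filter.eventually_ge_atTop 1] with m hm hm1
    have hm0 : (m : ℝ) ≠ 0 := Nat.cast_ne_zero.mpr (Nat.one_le_iff_ne_zero.mp hm1)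
    have h1 : ((‖B ^ m‖₊ : ENNReal) ^ (1 / (m : ℝ))) ^ (m : ℝ)
        < (c : ENNReal) ^ (m : ℝ) :=
      ENNReal.rpow_lt_rpow hm (by positivity)
    rw [← ENNReal.rpow_mul, one_div, inv_mul_cancel₀ hm0, ENNReal.rpow_one] at h1
    rw [ENNReal.rpow_natCast] at h1
    rw [← ENNReal.coe_pow] at h1
    have h2 : ‖B ^ m‖₊ ≤ c ^ m := le_of_lt (ENNReal.coe_lt_coe.mp h1)
    calc ‖B ^ m‖ = ((‖B ^ m‖₊ : NNReal) : ℝ) := (coe_nnnorm _).symm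
      _ ≤ ((c ^ m : NNReal) : ℝ) := NNReal.coe_le_coe.mpr h2
      _ = (c : ℝ) ^ m := by push_cast; ring
  have hsm : ∀ᶠ m : ℕ in Filter.atTop, Real.sqrt n * (c : ℝ) ^ m < C₁ := by
    have h0 := tendsto_pow_atTop_nhds_zero_of_lt_one c.coe_nonneg hc2'
    have h2 : Filter.Tendsto (fun m : ℕ => Real.sqrt n * (c : ℝ) ^ m)
        Filter.atTop (nhds (Real.sqrt n * 0)) := h0.const_mul _
    rw [mul_zero] at h2
    exact h2.eventually_lt_const hC₁
  obtain ⟨m, hm1, hm2⟩ := (hnorm.and hsm).exists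
  set i0 : Fin n := ⟨0, hn⟩
  have ht : (1 : ℝ) ≤ Real.exp (m : ℝ) := Real.one_le_exp (Nat.cast_nonneg m)
  have hb := (hbound (Real.exp (m : ℝ)) ht i0).1
  rw [Real.log_exp] at hb
  have hcast : (((m : ℝ) : ℂ)) • A = (m : ℕ) • A := by
    rw [show (((m : ℝ) : ℂ)) = ((m : ℕ) : ℂ) by push_cast; ring]
    exact Nat.cast_smul_eq_nsmul ℂ m A
  rw [hcast, Matrix.exp_nsmul] at hb
  have hsumle : ∑ j, ‖(B ^ m).mulVec (Pi.single i0 1) j‖ ^ 2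
      ≤ ∑ _j : Fin n, ((c : ℝ) ^ m) ^ 2 := by
    apply Finset.sum_le_sum
    intro j _
    have h1 : (B ^ m).mulVec (Pi.single i0 1) j = (B ^ m) j i0 := by
      simp [Matrix.mulVec_single]
    rw [h1]
    have h2 : ‖(B ^ m) j i0‖ ≤ (c : ℝ) ^ m :=
      (aux_entry_le_linfty (B ^ m) j i0).trans hm1
    exact pow_le_pow_left₀ (norm_nonneg _) h2 2
  have hfinal : Real.sqrt (∑ j, ‖(B ^ m).mulVec (Pi.single i0 1) j‖ ^ 2)
      ≤ Real.sqrt n * (c : ℝ) ^ m := by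
    calc Real.sqrt (∑ j, ‖(B ^ m).mulVec (Pi.single i0 1) j‖ ^ 2)
        ≤ Real.sqrt (∑ _j : Fin n, ((c : ℝ) ^ m) ^ 2) := Real.sqrt_le_sqrt hsumle
      _ = Real.sqrt ((n : ℝ) * ((c : ℝ) ^ m) ^ 2) := by
          rw [Finset.sum_const, Finset.card_univ, Fintype.card_fin]
          simp [nsmul_eq_mul]
      _ = Real.sqrt n * (c : ℝ) ^ m := by
          rw [Real.sqrt_mul (Nat.cast_nonneg n), Real.sqrt_sq (by positivity)]
  exact absurd (hb.trans hfinal) (not_le.mpr hm2)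
end
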